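/- Let G be an abelian group and let g : ω → G be a sequence such that the set {g(n) : n ∈ ω} is infinite and there is an integer k > 1 with k·(g(n) − g(n₀)) = 0 for all n and some fixed n₀. Then there exist c ∈ G, an infinite subset J ⊆ ω, and a divisor r > 1 of k such that {g(n) + c : n ∈ J} is an r-round subset of G and every element g(n) + c for n ∈ J has order r. -/
import Mathlib


/-- `S` is an `r`-round subset of the abelian group `G`. -/
def IsRound {G : Type*} [AddCommGroup G] (r : ℕ) (S : Set G) : Prop :=
  1 < r ∧ S.Countable ∧ S.Infinite ∧ (∀ x ∈ S, r • x = 0) ∧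
    ∀ e : ℕ, e ∣ r → e ≠ r → ∀ y : G, {x ∈ S | e • x = y}.Finite

theorem stmt13 {G : Type*} [AddCommGroup G] (g : ℕ → G)
    (hinf : (Set.range g).Infinite) (k : ℕ) (hk : 1 < k) (n₀ : ℕ)
    (htor : ∀ n, k • (g n - g n₀) = 0) :
    ∃ (c : G) (J : Set ℕ) (r : ℕ), J.Infinite ∧ 1 < r ∧ r ∣ k ∧
      IsRound r {x : G | ∃ n ∈ J, x = g n + c} ∧
      ∀ n ∈ J, addOrderOf (g n + c) = r := by
  classical
  set h : ℕ → G := fun n => g n - g n₀ with hh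
  have hrange : (Set.range h).Infinite := by
    have heq : Set.range h = (fun x => x - g n₀) '' Set.range g := by
      ext x
      simp only [Set.mem_range, Set.mem_image, hh]
      constructor
      · rintro ⟨n, rfl⟩; exact ⟨g n, ⟨n, rfl⟩, rfl⟩
      · rintro ⟨u, ⟨n, rfl⟩, rfl⟩; exact ⟨n, rfl⟩
    rw [heq]
    exact hinf.image (sub_left_injective.injOn)
  have hkh : ∀ x ∈ Set.range h, k • x = 0 := by
    rintro x ⟨n, rfl⟩; exact htor n
  set P : ℕ → Prop := fun d => d ∣ k ∧ ∃ y, {x ∈ Set.range h | d • x = y}.Infinite with hP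
  have hex : ∃ d, P d := by
    refine ⟨k, dvd_refl k, 0, ?_⟩
    have heq : {x ∈ Set.range h | k • x = 0} = Set.range h := by
      ext x
      simp only [Set.mem_setOf_eq]
      exact ⟨fun hx => hx.1, fun hx => ⟨hx, hkh x hx⟩⟩
    rw [heq]; exact hrange
  set d := Nat.find hex with hd
  obtain ⟨hdk, y, hy⟩ := Nat.find_spec hex
  rw [← hd] at hdk hy
  have hmin : ∀ e, e ∣ k → e < d → ∀ w, {x ∈ Set.range h | e • x = w}.Finite := by
    intro e hek helt w
    by_contra hfin
    exact Nat.find_min hex helt ⟨hek, w, hfin⟩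
  have hd0 : d ≠ 0 := by
    intro h0
    have : k = 0 := zero_dvd_iff.mp (h0 ▸ hdk)
    omega
  have hd1 : d ≠ 1 := by
    intro h1
    have hsub : {x ∈ Set.range h | d • x = y} ⊆ {y} := by
      intro x hx
      have : x = y := by
        have := hx.2
        rw [h1, one_smul] at this
        exact this
      simp [this]
    exact hy ((Set.finite_singleton y).subset hsub)
  have hd2 : 1 < d := by omega
  obtain ⟨z, hz⟩ := hy.nonempty
  set S₀ : Set G := (fun x => x - z) '' {x ∈ Set.range h | d • x = y} with hS₀
  have hS0inf : S₀.Infinite := hy.image (sub_left_injective.injOn)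
  have hS0zero : ∀ t ∈ S₀, d • t = 0 := by
    rintro t ⟨x, hx, rfl⟩
    rw [smul_sub, hx.2, hz.2, sub_self]
  have hS0mem : ∀ t ∈ S₀, ∃ n, t = g n + -(g n₀ + z) := by
    rintro t ⟨x, hx, rfl⟩
    obtain ⟨n, rfl⟩ := hx.1
    exact ⟨n, by simp only [hh]; abel⟩
  have hS0fib : ∀ e : ℕ, e ∣ d → e ≠ d → ∀ w : G, {t ∈ S₀ | e • t = w}.Finite := by
    intro e hed hne w
    have hek : e ∣ k := hed.trans hdk
    have helt : e < d := lt_of_le_of_ne (Nat.le_of_dvd (by omega) hed) hne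
    have hfin := hmin e hek helt (w + e • z)
    refine ((hfin.image (fun x => x - z)).subset ?_)
    rintro t ⟨⟨x, hx, rfl⟩, hw⟩
    refine ⟨x, ⟨hx.1, ?_⟩, rfl⟩
    rw [smul_sub] at hw
    have : e • x = w + e • z := by
      rw [← hw]; abel
    exact this
  set F : Set G := ⋃ e ∈ {e : ℕ | e ∣ d ∧ e ≠ d}, {t ∈ S₀ | e • t = 0} with hF
  have hFfin : F.Finite := by
    refine Set.Finite.biUnion ?_ ?_
    · refine (Set.finite_Iio d).subset ?_
      rintro e ⟨hed, hne⟩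
      exact lt_of_le_of_ne (Nat.le_of_dvd (by omega) hed) hne
    · rintro e ⟨hed, hne⟩
      exact hS0fib e hed hne 0
  set S' : Set G := S₀ \ F with hS'
  have hS'inf : S'.Infinite := hS0inf.diff hFfin
  have hS'sub : S' ⊆ S₀ := Set.diff_subset
  have horder : ∀ t ∈ S', addOrderOf t = d := by
    intro t ht
    have hdvd : addOrderOf t ∣ d := addOrderOf_dvd_of_nsmul_eq_zero (hS0zero t ht.1)
    by_contra hne
    exact ht.2 (Set.mem_biUnion (⟨hdvd, hne⟩ : addOrderOf t ∈ {e : ℕ | e ∣ d ∧ e ≠ d})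
      ⟨ht.1, addOrderOf_nsmul_eq_zero t⟩)
  set c : G := -(g n₀ + z) with hc
  set J : Set ℕ := {n : ℕ | g n + c ∈ S'} with hJ
  have hSet : {x : G | ∃ n ∈ J, x = g n + c} = S' := by
    ext x
    constructor
    · rintro ⟨n, hn, rfl⟩; exact hn
    · intro hx
      obtain ⟨n, rfl⟩ := hS0mem x (hS'sub hx)
      exact ⟨n, hx, rfl⟩
  have hJinf : J.Infinite := by
    intro hfin
    apply hS'inf
    refine ((hfin.image (fun n => g n + c)).subset ?_)
    intro t ht
    obtain ⟨n, hn, rfl⟩ := hSet ▸ ht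
    exact ⟨n, hn, rfl⟩
  refine ⟨c, J, d, hJinf, hd2, hdk, ?_, ?_⟩
  · rw [hSet]
    refine ⟨hd2, ?_, hS'inf, fun x hx => hS0zero x (hS'sub hx), ?_⟩
    · refine (Set.countable_range (fun n => g n + c)).mono ?_
      intro t ht
      obtain ⟨n, rfl⟩ := hS0mem t (hS'sub ht)
      exact ⟨n, rfl⟩
    · intro e hed hne w
      refine (hS0fib e hed hne w).subset ?_
      rintro t ⟨ht, hw⟩
      exact ⟨hS'sub ht, hw⟩
  · intro n hn
    exact horder _ hn
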